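/- The map sending a continuous integer-valued function f on the dyadic integers to its Haar integral induces a group isomorphism from the coinvariants C(Ω,Z)/{f − f∘τ : f ∈ C(Ω,Z)} onto Z[1/2], where τ is translation by 1. -/

import Mathlib

open MeasureTheory
open scoped ENNReal NNReal

/-- The subgroup `ℤ[1/2]` of `ℝ` of dyadic rationals (generated by the `2⁻ⁿ`). -/
noncomputable def dyadicSubgroup : AddSubgroup ℝ :=
  AddSubgroup.closure {x : ℝ | ∃ n : ℕ, x = ((2 : ℝ) ^ n)⁻¹}

/-- The odometer `x ↦ x + 1` on the dyadic integers, as a continuous map. -/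
noncomputable def tau : C(ℤ_[2], ℤ_[2]) := ⟨fun x => x + 1, by continuity⟩

/-- The subgroup of `C(Ω, ℤ)` generated by the elements `f - f ∘ τ`. -/
noncomputable def coinvRel : AddSubgroup C(ℤ_[2], ℤ) :=
  AddSubgroup.closure {g | ∃ f : C(ℤ_[2], ℤ), g = f - f.comp tau}

namespace Stmt2Aux

set_option linter.unusedSectionVars false

local notation "π" => PadicInt.toZModPow (p := 2)

lemma toZModPow_eq_iff (n : ℕ) (x y : ℤ_[2]) :
    π n x = π n y ↔ ‖x - y‖ ≤ ((2 : ℕ) : ℝ) ^ (-(n : ℤ)) := by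
  rw [← sub_eq_zero, ← map_sub, ← RingHom.mem_ker, PadicInt.ker_toZModPow,
    ← PadicInt.norm_le_pow_iff_mem_span_pow]

/-- Any function factoring through `toZModPow n` is continuous. -/
lemma continuous_factor {α : Type*} [TopologicalSpace α] (n : ℕ) (g : ZMod (2 ^ n) → α) :
    Continuous fun x : ℤ_[2] => g (π n x) := by
  refine IsLocallyConstant.continuous ?_
  rw [IsLocallyConstant.iff_exists_open]
  intro x
  refine ⟨Metric.ball x (((2 : ℕ) : ℝ) ^ (-(n : ℤ) + 1)), Metric.isOpen_ball, ?_, ?_⟩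
  · simp only [Metric.mem_ball, dist_self]
    positivity
  · intro y hy
    have hyx : π n y = π n x := by
      rw [toZModPow_eq_iff, PadicInt.norm_le_pow_iff_norm_lt_pow_add_one]
      rw [Metric.mem_ball, dist_eq_norm] at hy
      exact hy
    rw [hyx]

/-- The fiber of `toZModPow n` over `a`. -/
def S (n : ℕ) (a : ZMod (2 ^ n)) : Set ℤ_[2] := π n ⁻¹' {a}

lemma isOpen_S (n : ℕ) (a : ZMod (2 ^ n)) : IsOpen (S n a) := by
  classical
  have h : S n a = (fun x : ℤ_[2] => if π n x = a then (1 : ℤ) else 0) ⁻¹' {1} := by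
    ext x
    simp only [S, Set.mem_preimage, Set.mem_singleton_iff]
    split <;> simp_all
  rw [h]
  exact (continuous_factor (α := ℤ) n (fun b => if b = a then (1 : ℤ) else 0)).isOpen_preimage
    {1} (isOpen_discrete _)

lemma mem_S_iff (n : ℕ) (a : ZMod (2 ^ n)) (x : ℤ_[2]) : x ∈ S n a ↔ π n x = a := Iff.rfl

instance instNeZeroPow (n : ℕ) : NeZero (2 ^ n) := ⟨pow_ne_zero n two_ne_zero⟩

lemma toZModPow_natCast_val (n : ℕ) (a : ZMod (2 ^ n)) :
    π n ((a.val : ℤ_[2])) = a := by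
  rw [map_natCast, ZMod.natCast_zmod_val]

/-- Every continuous integer-valued function factors through some `toZModPow n`. -/
lemma exists_factor (f : C(ℤ_[2], ℤ)) :
    ∃ (n : ℕ) (g : ZMod (2 ^ n) → ℤ), ∀ x, f x = g (π n x) := by
  have huc := CompactSpace.uniformContinuous_of_continuous f.continuous
  rw [Metric.uniformContinuous_iff] at huc
  obtain ⟨δ, hδ, H⟩ := huc 1 one_pos
  obtain ⟨n, hn⟩ : ∃ n : ℕ, ((2 : ℕ) : ℝ) ^ (-(n : ℤ)) < δ := by
    obtain ⟨n, hn⟩ := exists_pow_lt_of_lt_one hδ (by norm_num : (1 : ℝ) / 2 < 1)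
    refine ⟨n, ?_⟩
    have heq : ((2 : ℕ) : ℝ) ^ (-(n : ℤ)) = ((1 : ℝ) / 2) ^ n := by
      rw [zpow_neg, zpow_natCast, one_div, inv_pow]
      norm_num
    rw [heq]; exact hn
  refine ⟨n, fun a => f ((a.val : ℤ_[2])), fun x => ?_⟩
  have hdist : dist x (((π n x).val : ℤ_[2])) < δ := by
    rw [dist_eq_norm]
    refine lt_of_le_of_lt ?_ hn
    rw [← toZModPow_eq_iff, toZModPow_natCast_val]
  have h1 := H hdist
  rw [Int.dist_eq] at h1
  have h2 : |(f x - f (((π n x).val : ℤ_[2])) : ℤ)| < 1 := by exact_mod_cast h1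
  rw [abs_lt] at h2
  have h3 : f x = f (((π n x).val : ℤ_[2])) := by omega
  exact h3

variable [MeasurableSpace ℤ_[2]] [BorelSpace ℤ_[2]]
variable (μ : Measure ℤ_[2]) [IsProbabilityMeasure μ] [Measure.IsAddLeftInvariant μ]

lemma measure_S (n : ℕ) (a : ZMod (2 ^ n)) : μ (S n a) = ((2 : ℝ≥0∞) ^ n)⁻¹ := by
  classical
  have hmeas : ∀ b : ZMod (2 ^ n), MeasurableSet (S n b) := fun b => (isOpen_S n b).measurableSet
  -- all fibers have the same measure
  have htrans : ∀ b : ZMod (2 ^ n), μ (S n b) = μ (S n 0) := by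
    intro b
    have h : S n 0 = (fun x : ℤ_[2] => ((b.val : ℤ_[2])) + x) ⁻¹' (S n b) := by
      ext x
      simp only [Set.mem_preimage, mem_S_iff, map_add, toZModPow_natCast_val]
      constructor
      · intro h; rw [h, add_zero]
      · intro h
        have h' : b + π n x = b + 0 := by rw [h, add_zero]
        exact add_left_cancel h'
    rw [h, measure_preimage_add]
  -- the fibers partition the whole space
  have hunion : (⋃ b : ZMod (2 ^ n), S n b) = Set.univ := by
    ext x; simp [mem_S_iff]
  have hdisj : Pairwise (Function.onFun Disjoint fun b : ZMod (2 ^ n) => S n b) := by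
    intro b c hbc
    refine Set.disjoint_left.2 fun x hxb hxc => hbc ?_
    rw [mem_S_iff] at hxb hxc
    rw [← hxb, ← hxc]
  have hcount : μ Set.univ = ∑ b : ZMod (2 ^ n), μ (S n b) := by
    rw [← hunion, measure_iUnion hdisj hmeas, tsum_fintype]
  rw [measure_univ] at hcount
  have hcard : (Fintype.card (ZMod (2 ^ n)) : ℝ≥0∞) = (2 : ℝ≥0∞) ^ n := by
    rw [ZMod.card]
    push_cast
    ring
  have hsum : (1 : ℝ≥0∞) = (2 : ℝ≥0∞) ^ n * μ (S n 0) := by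
    rw [hcount, Finset.sum_congr rfl fun b _ => htrans b, Finset.sum_const, Finset.card_univ,
      nsmul_eq_mul, hcard]
  have h0 : μ (S n 0) = ((2 : ℝ≥0∞) ^ n)⁻¹ := by
    refine ENNReal.eq_inv_of_mul_eq_one_left ?_
    rw [mul_comm]
    exact hsum.symm
  rw [htrans a, h0]

lemma measure_S_toReal (n : ℕ) (a : ZMod (2 ^ n)) :
    (μ (S n a)).toReal = ((2 : ℝ) ^ n)⁻¹ := by
  rw [measure_S μ n a]
  rw [ENNReal.toReal_inv]
  norm_num

lemma integral_factor (n : ℕ) (g : ZMod (2 ^ n) → ℤ) :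
    ∫ x, ((g (π n x) : ℤ) : ℝ) ∂μ = (∑ a : ZMod (2 ^ n), (g a : ℝ)) * ((2 : ℝ) ^ n)⁻¹ := by
  classical
  have hmeas : ∀ b : ZMod (2 ^ n), MeasurableSet (S n b) := fun b => (isOpen_S n b).measurableSet
  have hfun : ∀ x : ℤ_[2], ((g (π n x) : ℤ) : ℝ) =
      ∑ a : ZMod (2 ^ n), (S n a).indicator (fun _ => ((g a : ℤ) : ℝ)) x := by
    intro x
    rw [Finset.sum_congr rfl fun a _ => Set.indicator_apply (S n a) _ x]
    simp only [mem_S_iff]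
    rw [Finset.sum_ite_eq (Finset.univ) (π n x) (fun a => ((g a : ℤ) : ℝ))]
    simp
  rw [integral_congr_ae (Filter.Eventually.of_forall hfun)]
  rw [integral_finset_sum _ fun a _ => (integrable_const ((g a : ℤ) : ℝ)).indicator (hmeas a)]
  rw [Finset.sum_congr rfl fun a _ => integral_indicator_const ((g a : ℤ) : ℝ) (hmeas a)]
  rw [Finset.sum_congr rfl fun a _ => by rw [measureReal_def, measure_S_toReal μ n a, smul_eq_mul, mul_comm]]
  rw [← Finset.sum_mul]

lemma integrable_cast (f : C(ℤ_[2], ℤ)) : Integrable (fun x => ((f x : ℤ) : ℝ)) μ := by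
  have hc : Continuous fun x : ℤ_[2] => ((f x : ℤ) : ℝ) :=
    (continuous_of_discreteTopology (f := fun k : ℤ => (k : ℝ))).comp f.continuous
  exact hc.integrable_of_hasCompactSupport (IsClosed.isCompact (isClosed_tsupport _))

/-- Integration as an additive group homomorphism. -/
noncomputable def I : C(ℤ_[2], ℤ) →+ ℝ where
  toFun f := ∫ x, ((f x : ℤ) : ℝ) ∂μ
  map_zero' := by simp
  map_add' f g := by
    have := integral_add (integrable_cast μ f) (integrable_cast μ g)
    simp only [ContinuousMap.add_apply, Int.cast_add]
    rw [← this]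

lemma I_apply (f : C(ℤ_[2], ℤ)) : I μ f = ∫ x, ((f x : ℤ) : ℝ) ∂μ := rfl

lemma I_factor (f : C(ℤ_[2], ℤ)) (n : ℕ) (g : ZMod (2 ^ n) → ℤ) (hg : ∀ x, f x = g (π n x)) :
    I μ f = (∑ a : ZMod (2 ^ n), (g a : ℝ)) * ((2 : ℝ) ^ n)⁻¹ := by
  rw [I_apply, ← integral_factor μ n g]
  exact integral_congr_ae (Filter.Eventually.of_forall fun x => by dsimp only; rw [hg x])

/-- Partial-sum function: the key to showing mean-zero functions are coboundaries. -/
def F (n : ℕ) (g : ZMod (2 ^ n) → ℤ) : ZMod (2 ^ n) → ℤ :=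
  fun a => ∑ j ∈ Finset.range a.val, g (j : ZMod (2 ^ n))

lemma sum_univ_eq_sum_range (n : ℕ) (g : ZMod (2 ^ n) → ℤ) :
    ∑ a : ZMod (2 ^ n), g a = ∑ j ∈ Finset.range (2 ^ n), g (j : ZMod (2 ^ n)) := by
  rw [Finset.sum_bij (fun (a : ZMod (2 ^ n)) _ => a.val)]
  · intro a _; exact Finset.mem_range.2 (ZMod.val_lt a)
  · intro a _ b _ h; exact ZMod.val_injective _ h
  · intro j hj; exact ⟨(j : ZMod (2 ^ n)), Finset.mem_univ _,
      ZMod.val_cast_of_lt (Finset.mem_range.1 hj)⟩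
  · intro a _; rw [ZMod.natCast_zmod_val]

lemma coboundary_key (n : ℕ) (g : ZMod (2 ^ n) → ℤ)
    (hg : ∑ a : ZMod (2 ^ n), g a = 0) (a : ZMod (2 ^ n)) :
    g a = F n g (a + 1) - F n g a := by
  classical
  have hlt := ZMod.val_lt a
  rcases Nat.lt_or_ge (a.val + 1) (2 ^ n) with h | h
  · -- non-wraparound case
    have h2 : 1 < 2 ^ n := by omega
    haveI : Fact (1 < 2 ^ n) := ⟨h2⟩
    have hval : (a + 1).val = a.val + 1 := by
      rw [ZMod.val_add, ZMod.val_one, Nat.mod_eq_of_lt h]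
    simp only [F, hval, Finset.sum_range_succ, ZMod.natCast_zmod_val]
    ring
  · -- wraparound: a.val = 2^n - 1
    have hval : a.val = 2 ^ n - 1 := by omega
    have ha1 : a + 1 = 0 := by
      have hc : ((a.val : ZMod (2 ^ n))) + 1 = ((a.val + 1 : ℕ) : ZMod (2 ^ n)) := by
        push_cast; ring
      rw [← ZMod.natCast_zmod_val a, hc]
      have hN : a.val + 1 = 2 ^ n := by omega
      rw [hN, ZMod.natCast_self]
    have hF0 : F n g (a + 1) = 0 := by
      rw [ha1]
      simp [F, ZMod.val_zero]
    rw [hF0, zero_sub]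
    have htot : ∑ j ∈ Finset.range (2 ^ n), g (j : ZMod (2 ^ n)) = 0 := by
      rw [← sum_univ_eq_sum_range]; exact hg
    have hsplit : (2 : ℕ) ^ n = (2 ^ n - 1) + 1 := by omega
    have htot' : ∑ j ∈ Finset.range ((2 ^ n - 1) + 1), g (j : ZMod (2 ^ n)) = 0 := by
      rw [← hsplit]; exact htot
    rw [Finset.sum_range_succ] at htot'
    have hlast : g (((2 ^ n - 1 : ℕ) : ZMod (2 ^ n))) = g a := by
      congr 1
      rw [← hval, ZMod.natCast_zmod_val]
    rw [hlast] at htot'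
    simp only [F, hval]
    omega

lemma pi_tau (n : ℕ) (x : ℤ_[2]) : π n (tau x) = π n x + 1 := by
  show π n (x + 1) = π n x + 1
  rw [map_add, map_one]

/-- The kernel of integration is exactly the coinvariants subgroup. -/
lemma ker_I : (I μ).ker = coinvRel := by
  classical
  apply le_antisymm
  · -- ker ≤ coinvRel : mean-zero functions are coboundaries
    intro f hf
    rw [AddMonoidHom.mem_ker] at hf
    obtain ⟨n, g, hg⟩ := exists_factor f
    have hint := I_factor μ f n g hg
    rw [hf] at hint
    have h1 : (∑ a : ZMod (2 ^ n), (g a : ℝ)) = 0 := by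
      have hne : ((2 : ℝ) ^ n)⁻¹ ≠ 0 := by positivity
      rcases mul_eq_zero.mp hint.symm with h | h
      · exact h
      · exact absurd h hne
    have hsum : ∑ a : ZMod (2 ^ n), g a = 0 := by
      have hcast : ((∑ a : ZMod (2 ^ n), g a : ℤ) : ℝ) = 0 := by push_cast; exact h1
      exact_mod_cast hcast
    set h : C(ℤ_[2], ℤ) := ⟨fun x => F n g (π n x), continuous_factor n _⟩ with hh
    have hgen : h - h.comp tau ∈ coinvRel := AddSubgroup.subset_closure ⟨h, rfl⟩
    have key : f = -(h - h.comp tau) := by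
      ext x
      simp only [ContinuousMap.neg_apply, ContinuousMap.sub_apply, ContinuousMap.comp_apply]
      rw [hg x]
      have htau : h (tau x) = F n g (π n x + 1) := by
        simp only [hh, ContinuousMap.coe_mk]
        rw [pi_tau]
      rw [htau]
      simp only [hh, ContinuousMap.coe_mk]
      rw [coboundary_key n g hsum (π n x)]
      ring
    rw [key]
    exact neg_mem hgen
  · -- coinvRel ≤ ker
    rw [coinvRel, AddSubgroup.closure_le]
    rintro _ ⟨f, rfl⟩
    simp only [SetLike.mem_coe, AddMonoidHom.mem_ker, map_sub, I_apply]
    have heq : ∫ x, ((f.comp tau) x : ℝ) ∂μ = ∫ x, ((f x : ℤ) : ℝ) ∂μ := by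
      show ∫ x, ((f (x + 1) : ℤ) : ℝ) ∂μ = _
      have hcomm : ∀ x : ℤ_[2], ((f (x + 1) : ℤ) : ℝ) = ((f (1 + x) : ℤ) : ℝ) := fun x => by
        rw [add_comm]
      rw [integral_congr_ae (Filter.Eventually.of_forall hcomm)]
      exact integral_add_left_eq_self (μ := μ) (fun y => ((f y : ℤ) : ℝ)) 1
    rw [heq, sub_self]

/-- The range of integration is the dyadic subgroup. -/
lemma range_I : (I μ).range = dyadicSubgroup := by
  classical
  apply le_antisymm
  · rintro _ ⟨f, rfl⟩
    obtain ⟨n, g, hg⟩ := exists_factor f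
    rw [I_factor μ f n g hg]
    have hz : (∑ a : ZMod (2 ^ n), (g a : ℝ)) * ((2 : ℝ) ^ n)⁻¹
        = (∑ a : ZMod (2 ^ n), g a : ℤ) • ((2 : ℝ) ^ n)⁻¹ := by
      rw [zsmul_eq_mul]; push_cast; ring
    rw [hz]
    have hgen : ((2 : ℝ) ^ n)⁻¹ ∈ AddSubgroup.closure {x : ℝ | ∃ k : ℕ, x = ((2 : ℝ) ^ k)⁻¹} :=
      AddSubgroup.subset_closure ⟨n, rfl⟩
    unfold dyadicSubgroup
    exact zsmul_mem hgen _
  · rw [dyadicSubgroup, AddSubgroup.closure_le]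
    rintro _ ⟨n, rfl⟩
    set f : C(ℤ_[2], ℤ) := ⟨fun x => if π n x = 0 then 1 else 0,
      continuous_factor (α := ℤ) n (fun a => if a = 0 then 1 else 0)⟩ with hf
    rw [SetLike.mem_coe, AddMonoidHom.mem_range]
    refine ⟨f, ?_⟩
    rw [I_factor μ f n (fun a => if a = 0 then 1 else 0) (fun x => by
      simp only [hf, ContinuousMap.coe_mk])]
    have hsum : (∑ a : ZMod (2 ^ n), ((if a = 0 then (1 : ℤ) else 0 : ℤ) : ℝ)) = 1 := by
      simp only [Int.cast_ite, Int.cast_one, Int.cast_zero]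
      rw [Finset.sum_ite_eq' Finset.univ (0 : ZMod (2 ^ n)) (fun _ => (1 : ℝ))]
      simp
    rw [hsum, one_mul]

end Stmt2Aux

/-- Integration against normalized Haar measure induces an isomorphism from the
coinvariants `C(Ω, ℤ)/{f - f∘τ}` onto `ℤ[1/2]`. -/
theorem stmt2 [MeasurableSpace ℤ_[2]] [BorelSpace ℤ_[2]]
    (μ : Measure ℤ_[2]) [IsProbabilityMeasure μ] [μ.IsAddLeftInvariant] :
    ∃ φ : (C(ℤ_[2], ℤ) ⧸ coinvRel) ≃+ dyadicSubgroup,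
      ∀ f : C(ℤ_[2], ℤ),
        (φ (QuotientAddGroup.mk f) : ℝ) = ∫ x, (f x : ℝ) ∂μ := by
  classical
  have hker := Stmt2Aux.ker_I μ
  have hrange := Stmt2Aux.range_I μ
  refine ⟨((QuotientAddGroup.quotientAddEquivOfEq hker.symm).trans
    (QuotientAddGroup.quotientKerEquivRange (Stmt2Aux.I μ))).trans
    (AddEquiv.addSubgroupCongr hrange), fun f => ?_⟩
  simp only [AddEquiv.trans_apply]
  rw [QuotientAddGroup.quotientAddEquivOfEq_mk]
  rfl
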